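/- arXiv:2601.05674 — 2 statements merged into one kernel-verified Lean document; each statement's English description precedes it below -/
import Mathlib

section
/- The function f(x) = x·e^{√(1−x²)}/(1+√(1−x²)) is monotonically increasing on [0,1) and satisfies 0 ≤ f(x) < 1 for all x ∈ [0,1). -/
open MeasureTheory Filter Finset
open scoped Real RealInnerProductSpace ComplexConjugate

noncomputable section

/-- `ℝ³` as a Euclidean space. -/
abbrev E3 : Type := EuclideanSpace ℝ (Fin 3)
/-- `ℂ³` as a Euclidean (Hilbert) space. -/
abbrev C3 : Type := EuclideanSpace ℂ (Fin 3)
/-- The unit sphere `S² ⊂ ℝ³`. -/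
abbrev S2 : Type := Metric.sphere (0 : E3) 1

/-- The surface measure on the unit sphere `S²`. -/
def sphereMeasure : Measure S2 := (volume : Measure E3).toSphere

/-- The Bessel function of the first kind of real order `ν`, via its power series. -/
def besselJ (ν x : ℝ) : ℝ :=
  ∑' m : ℕ, ((-1 : ℝ) ^ m / (m.factorial * Real.Gamma (m + ν + 1))) *
    (x / 2) ^ (2 * m) * Real.rpow (x / 2) ν

/-- Siegel's comparison function `f(x) = x e^{√(1-x²)} / (1 + √(1-x²))`. -/
def siegelF (x : ℝ) : ℝ :=
  x * Real.exp (Real.sqrt (1 - x ^ 2)) / (1 + Real.sqrt (1 - x ^ 2))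

/-- The spherical Bessel function of the first kind of degree `ℓ`,
`j_ℓ(u) = √(π/(2u)) J_{ℓ+1/2}(u)`, extended by continuity at `u = 0`. -/
def sBesselJ (ℓ : ℕ) (u : ℝ) : ℝ :=
  if u = 0 then (if ℓ = 0 then 1 else 0)
  else Real.sqrt (Real.pi / (2 * u)) * besselJ ((ℓ : ℝ) + 1 / 2) u

/-- The Legendre polynomial of degree `ℓ` (Rodrigues' formula). -/
def legendreP (ℓ : ℕ) (x : ℝ) : ℝ :=
  (1 / ((2 : ℝ) ^ ℓ * ℓ.factorial)) *
    iteratedDeriv ℓ (fun t : ℝ => (t ^ 2 - 1) ^ ℓ) x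

/-- Associated Legendre function `P_ℓ^n` for natural order `n` (Condon–Shortley phase). -/
def assocLegendreNat (ℓ n : ℕ) (x : ℝ) : ℝ :=
  (-1 : ℝ) ^ n * Real.rpow (1 - x ^ 2) ((n : ℝ) / 2) *
    iteratedDeriv n (legendreP ℓ) x

/-- Associated Legendre function `P_ℓ^m` for integer order `m`. -/
def assocLegendre (ℓ : ℕ) (m : ℤ) (x : ℝ) : ℝ :=
  if 0 ≤ m then assocLegendreNat ℓ m.toNat x
  else (-1 : ℝ) ^ (-m).toNat *
    ((ℓ - (-m).toNat).factorial : ℝ) / ((ℓ + (-m).toNat).factorial : ℝ) *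
    assocLegendreNat ℓ (-m).toNat x

/-- The (complex, orthonormal) scalar spherical harmonic `Y_ℓ^m`, defined on `ℝ³ \ {0}`
as a degree-zero homogeneous function (so its restriction to `S²` is the usual one). -/
def sphericalHarmonic (ℓ : ℕ) (m : ℤ) (v : E3) : ℂ :=
  (Real.sqrt ((2 * ℓ + 1) / (4 * Real.pi) *
      ((((ℓ : ℤ) - m).toNat.factorial : ℝ) / (((ℓ : ℤ) + m).toNat.factorial : ℝ))) : ℂ) *
    (assocLegendre ℓ m (v 2 / ‖v‖) : ℂ) *
    Complex.exp (Complex.I * (m : ℂ) * (Complex.arg ((v 0 : ℂ) + (v 1 : ℂ) * Complex.I) : ℂ))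

/-- Embedding of a real vector into `ℂ³`. -/
def realToC3 (v : E3) : C3 := (WithLp.equiv 2 (Fin 3 → ℂ)).symm fun i => (v i : ℂ)

/-- Cross product on `ℂ³`. -/
def crossC (a b : C3) : C3 :=
  (WithLp.equiv 2 (Fin 3 → ℂ)).symm
    ![a 1 * b 2 - a 2 * b 1, a 2 * b 0 - a 0 * b 2, a 0 * b 1 - a 1 * b 0]

/-- Gradient of the (degree-zero homogeneously extended) spherical harmonic `Y_ℓ^m`,
as a vector in `ℂ³`. -/
def gradSH (ℓ : ℕ) (m : ℤ) (v : E3) : C3 :=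
  (WithLp.equiv 2 (Fin 3 → ℂ)).symm fun i =>
    fderiv ℝ (sphericalHarmonic ℓ m) v (EuclideanSpace.single i 1)

/-- Radial vector spherical harmonic `Y_ℓ^m(r̂) r̂`. -/
def vshY (ℓ : ℕ) (m : ℤ) (v : E3) : C3 := sphericalHarmonic ℓ m v • realToC3 v

/-- Tangential vector spherical harmonic `Ψ_ℓ^m = r ∇Y_ℓ^m`. -/
def vshPsi (ℓ : ℕ) (m : ℤ) (v : E3) : C3 := ‖v‖ • gradSH ℓ m v

/-- Tangential vector spherical harmonic `Φ_ℓ^m = r̂ × ∇Y_ℓ^m` (on the unit sphere). -/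
def vshPhi (ℓ : ℕ) (m : ℤ) (v : E3) : C3 := crossC (realToC3 v) (gradSH ℓ m v)

/-- The orthogonal projection `I₃ - r̂ r̂ᵀ` onto the plane perpendicular to `v`,
applied to a complex vector. -/
def tangentProj (v : E3) (w : C3) : C3 :=
  w - (∑ i : Fin 3, (v i : ℂ) * w i) • realToC3 v

/-- The exponent `β(L) = -ln f(ka/(L+1/2))` appearing in the super-exponential decay. -/
def betaFn (a k : ℝ) (L : ℕ) : ℝ := - Real.log (siegelF (k * a / ((L : ℝ) + 1 / 2)))

end

lemma siegelF_hasDerivAt {x : ℝ} (hx : x ∈ Set.Ioo (0:ℝ) 1) :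
    HasDerivAt siegelF
      (Real.sqrt (1 - x ^ 2) * Real.exp (Real.sqrt (1 - x ^ 2)) / (1 + Real.sqrt (1 - x ^ 2))) x := by
  obtain ⟨hx0, hx1⟩ := hx
  have h1 : (0:ℝ) < 1 - x ^ 2 := by nlinarith
  set s := Real.sqrt (1 - x ^ 2) with hs_def
  have hs_pos : 0 < s := Real.sqrt_pos.mpr h1
  have hs_sq : s ^ 2 = 1 - x ^ 2 := Real.sq_sqrt h1.le
  have hsq : HasDerivAt (fun y : ℝ => 1 - y ^ 2) (-(2 * x)) x := by
    simpa using (hasDerivAt_pow 2 x).const_sub 1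
  have hsqrt : HasDerivAt (fun y : ℝ => Real.sqrt (1 - y ^ 2))
      (1 / (2 * s) * (-(2 * x))) x :=
    (Real.hasDerivAt_sqrt h1.ne').comp x hsq
  have hexp : HasDerivAt (fun y : ℝ => Real.exp (Real.sqrt (1 - y ^ 2)))
      (Real.exp s * (1 / (2 * s) * (-(2 * x)))) x := hsqrt.exp
  have hnum : HasDerivAt (fun y : ℝ => y * Real.exp (Real.sqrt (1 - y ^ 2)))
      (1 * Real.exp s + x * (Real.exp s * (1 / (2 * s) * (-(2 * x))))) x :=
    (hasDerivAt_id x).mul hexp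
  have hden : HasDerivAt (fun y : ℝ => 1 + Real.sqrt (1 - y ^ 2))
      (1 / (2 * s) * (-(2 * x))) x := hsqrt.const_add 1
  have hden_ne : (1 : ℝ) + s ≠ 0 := by positivity
  have hdiv := hnum.div hden hden_ne
  refine (show HasDerivAt siegelF _ x from hdiv).congr_deriv ?_
  rw [← hs_def]
  field_simp
  linear_combination (-s) * hs_sq

lemma siegelF_continuous : Continuous siegelF := by
  unfold siegelF
  apply Continuous.div
  · exact continuous_id.mul ((Real.continuous_sqrt.comp (by continuity)).rexp)
  · exact continuous_const.add (Real.continuous_sqrt.comp (by continuity))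
  · intro x
    have := Real.sqrt_nonneg (1 - x ^ 2)
    positivity

lemma siegelF_strictMonoOn : StrictMonoOn siegelF (Set.Icc (0:ℝ) 1) := by
  apply strictMonoOn_of_deriv_pos (convex_Icc 0 1) siegelF_continuous.continuousOn
  intro x hx
  rw [interior_Icc] at hx
  rw [(siegelF_hasDerivAt hx).deriv]
  have h1 : (0:ℝ) < 1 - x ^ 2 := by nlinarith [hx.1, hx.2]
  have hs : 0 < Real.sqrt (1 - x ^ 2) := Real.sqrt_pos.mpr h1
  positivity

lemma siegelF_one : siegelF 1 = 1 := by
  simp [siegelF]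

/-- `f(x) = x e^{√(1-x²)}/(1+√(1-x²))` is monotonically increasing on `[0,1)`
and satisfies `0 ≤ f(x) < 1` there. -/
theorem siegelF_monotoneOn_and_lt_one :
    MonotoneOn siegelF (Set.Ico (0 : ℝ) 1) ∧
      ∀ x ∈ Set.Ico (0 : ℝ) 1, 0 ≤ siegelF x ∧ siegelF x < 1 := by
  constructor
  · exact siegelF_strictMonoOn.monotoneOn.mono Set.Ico_subset_Icc_self
  · rintro x ⟨hx0, hx1⟩
    refine ⟨?_, ?_⟩
    · have h := Real.sqrt_nonneg (1 - x ^ 2)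
      have he := (Real.exp_pos (Real.sqrt (1 - x ^ 2))).le
      unfold siegelF
      positivity
    · have := siegelF_strictMonoOn ⟨hx0, hx1.le⟩ (Set.right_mem_Icc.mpr zero_le_one) hx1
      rwa [siegelF_one] at this
end

section
/- For fixed a > 0, k > 0, and L ≥ ⌈ka⌉, the quantity f(ka/(L+1/2))^L decays super-exponentially in L: writing β(L) = −ln f(ka/(L+1/2)), the function β is positive and monotonically increasing for L ≥ ⌈ka⌉ and β(L) → ∞ as L → ∞. -/
open MeasureTheory Filter Finset
open scoped Real RealInnerProductSpace ComplexConjugate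

private lemma aux_exp_ineq (s : ℝ) (hs : 0 < s) :
    1 - s < (1 + s) * Real.exp (-(2 * s)) := by
  have key : StrictMonoOn (fun s : ℝ => (1 + s) * Real.exp (-(2 * s)) - (1 - s))
      (Set.Ici 0) := by
    apply strictMonoOn_of_deriv_pos (convex_Ici 0)
    · fun_prop
    · intro x hx
      rw [interior_Ici] at hx
      have hxpos : 0 < x := hx
      have h2 : HasDerivAt (fun s : ℝ => Real.exp (-(2 * s)))
          (Real.exp (-(2 * x)) * (-2)) x := by
        have h0 : HasDerivAt (fun s : ℝ => -(2 * s)) (-2) x := by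
          simpa [Pi.neg_def] using ((hasDerivAt_id x).const_mul (2 : ℝ)).neg
        exact h0.exp
      have h1 : HasDerivAt (fun s : ℝ => (1 : ℝ) + s) 1 x := (hasDerivAt_id x).const_add 1
      have h3 : HasDerivAt (fun s : ℝ => (1 : ℝ) - s) (-1) x := by
        simpa using (hasDerivAt_id x).const_sub 1
      have hd : HasDerivAt (fun s : ℝ => (1 + s) * Real.exp (-(2 * s)) - (1 - s))
          (1 * Real.exp (-(2 * x)) + (1 + x) * (Real.exp (-(2 * x)) * (-2)) - (-1)) x :=
        (h1.mul h2).sub h3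
      rw [hd.deriv]
      have hlt : 2 * x + 1 < Real.exp (2 * x) := by
        have := Real.add_one_lt_exp (x := 2 * x) (ne_of_gt (by positivity))
        linarith
      have hE : Real.exp (-(2 * x)) * Real.exp (2 * x) = 1 := by
        rw [← Real.exp_add]; simp
      nlinarith [Real.exp_pos (-(2 * x)), Real.exp_pos (2 * x)]
  have h0 : (0 : ℝ) ∈ Set.Ici (0 : ℝ) := Set.self_mem_Ici
  have hs' : s ∈ Set.Ici (0 : ℝ) := le_of_lt hs
  have := key h0 hs' hs
  simp only [mul_zero, neg_zero, Real.exp_zero] at this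
  linarith

private lemma aux_phi_anti : StrictAntiOn
    (fun s : ℝ => s + (Real.log (1 - s) - Real.log (1 + s)) / 2) (Set.Ico 0 1) := by
  apply strictAntiOn_of_deriv_neg (convex_Ico 0 1)
  · apply ContinuousOn.add continuousOn_id
    apply ContinuousOn.div_const
    apply ContinuousOn.sub
    · apply ContinuousOn.log (by fun_prop)
      intro x hx
      simp only [Set.mem_Ico] at hx
      have : 0 < 1 - x := by linarith [hx.2]
      exact ne_of_gt this
    · apply ContinuousOn.log (by fun_prop)
      intro x hx
      simp only [Set.mem_Ico] at hx
      have : 0 < 1 + x := by linarith [hx.1]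
      exact ne_of_gt this
  · intro x hx
    rw [interior_Ico] at hx
    obtain ⟨hx0, hx1⟩ := hx
    have h1m : (1 : ℝ) - x ≠ 0 := ne_of_gt (by linarith)
    have h1p : (1 : ℝ) + x ≠ 0 := ne_of_gt (by linarith)
    have hd1 : HasDerivAt (fun s : ℝ => Real.log (1 - s)) ((-1) / (1 - x)) x := by
      have h3 : HasDerivAt (fun s : ℝ => (1 : ℝ) - s) (-1) x := by
        simpa using (hasDerivAt_id x).const_sub 1
      exact h3.log h1m
    have hd2 : HasDerivAt (fun s : ℝ => Real.log (1 + s)) (1 / (1 + x)) x := by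
      have h3 : HasDerivAt (fun s : ℝ => (1 : ℝ) + s) 1 x := (hasDerivAt_id x).const_add 1
      exact h3.log h1p
    have hd : HasDerivAt (fun s : ℝ => s + (Real.log (1 - s) - Real.log (1 + s)) / 2)
        (1 + ((-1) / (1 - x) - 1 / (1 + x)) / 2) x :=
      (hasDerivAt_id x).add ((hd1.sub hd2).div_const 2)
    rw [hd.deriv]
    have e1 : (0 : ℝ) < 1 - x := by linarith
    have e2 : (0 : ℝ) < 1 + x := by linarith
    rw [div_sub_div _ _ (ne_of_gt e1) (ne_of_gt e2)]
    have : (-1) * (1 + x) - (1 - x) * 1 = -2 := by ring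
    rw [this]
    have hprod : 0 < (1 - x) * (1 + x) := mul_pos e1 e2
    have hlt : (1 - x) * (1 + x) < 1 := by nlinarith
    have : 1 < 2 / ((1 - x) * (1 + x)) := by
      rw [lt_div_iff₀ hprod]; linarith
    have h2 : (-2 : ℝ) / ((1 - x) * (1 + x)) / 2 = -(1 / ((1 - x) * (1 + x))) := by
      field_simp
    rw [h2]
    have : 1 < 1 / ((1 - x) * (1 + x)) := by
      rw [lt_div_iff₀ hprod]; linarith
    linarith

private lemma siegelF_log_eq (x : ℝ) (hx0 : 0 < x) (hx1 : x < 1) :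
    Real.log (siegelF x) =
      Real.sqrt (1 - x ^ 2) +
        (Real.log (1 - Real.sqrt (1 - x ^ 2)) - Real.log (1 + Real.sqrt (1 - x ^ 2))) / 2 ∧
      0 < Real.sqrt (1 - x ^ 2) ∧ Real.sqrt (1 - x ^ 2) < 1 := by
  set s := Real.sqrt (1 - x ^ 2) with hs
  have h1x : (0 : ℝ) < 1 - x ^ 2 := by nlinarith
  have hs0 : 0 < s := Real.sqrt_pos.mpr h1x
  have hs2 : s ^ 2 = 1 - x ^ 2 := Real.sq_sqrt (le_of_lt h1x)
  have hs1 : s < 1 := by nlinarith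
  have h1ms : (0 : ℝ) < 1 - s := by linarith
  have h1ps : (0 : ℝ) < 1 + s := by linarith
  refine ⟨?_, hs0, hs1⟩
  have hlogx : Real.log x = (Real.log (1 - s) + Real.log (1 + s)) / 2 := by
    have hx2 : x ^ 2 = (1 - s) * (1 + s) := by nlinarith
    have := Real.log_pow x 2
    rw [hx2, Real.log_mul (ne_of_gt h1ms) (ne_of_gt h1ps)] at this
    push_cast at this
    linarith
  have : siegelF x = x * Real.exp s / (1 + s) := rfl
  rw [this, Real.log_div (by positivity) (ne_of_gt h1ps),
    Real.log_mul (ne_of_gt hx0) (ne_of_gt (Real.exp_pos s)), Real.log_exp, hlogx]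
  ring

/-- Super-exponential decay of `f(ka/(L+1/2))^L`: the exponent
`β(L) = -ln f(ka/(L+1/2))` is positive and monotonically increasing for
integer `L ≥ ⌈ka⌉`, and `β(L) → ∞` as `L → ∞`. -/
theorem betaFn_pos_monotone_tendsto (a k : ℝ) (ha : 0 < a) (hk : 0 < k) :
    (∀ L : ℕ, ⌈k * a⌉₊ ≤ L → 0 < betaFn a k L) ∧
    (∀ L₁ L₂ : ℕ, ⌈k * a⌉₊ ≤ L₁ → L₁ ≤ L₂ → betaFn a k L₁ ≤ betaFn a k L₂) ∧
    Tendsto (fun L : ℕ => betaFn a k L) atTop atTop := by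
  have hc0 : 0 < k * a := mul_pos hk ha
  set c := k * a with hcdef
  -- basic bounds on x_L = c / (L + 1/2)
  have hxfacts : ∀ L : ℕ, ⌈c⌉₊ ≤ L →
      0 < c / ((L : ℝ) + 1 / 2) ∧ c / ((L : ℝ) + 1 / 2) < 1 := by
    intro L hL
    have h1 : c ≤ (L : ℝ) := le_trans (Nat.le_ceil c) (by exact_mod_cast hL)
    have hden : (0 : ℝ) < (L : ℝ) + 1 / 2 := by positivity
    refine ⟨by positivity, ?_⟩
    rw [div_lt_one hden]; linarith
  -- β L = - φ (s_L) with φ from aux_phi_anti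
  have hbeta : ∀ L : ℕ, ⌈c⌉₊ ≤ L →
      betaFn a k L = -((fun s : ℝ => s + (Real.log (1 - s) - Real.log (1 + s)) / 2)
        (Real.sqrt (1 - (c / ((L : ℝ) + 1 / 2)) ^ 2))) ∧
      Real.sqrt (1 - (c / ((L : ℝ) + 1 / 2)) ^ 2) ∈ Set.Ico (0 : ℝ) 1 ∧
      0 < Real.sqrt (1 - (c / ((L : ℝ) + 1 / 2)) ^ 2) := by
    intro L hL
    obtain ⟨hx0, hx1⟩ := hxfacts L hL
    obtain ⟨heq, hs0, hs1⟩ := siegelF_log_eq _ hx0 hx1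
    refine ⟨?_, ⟨le_of_lt hs0, hs1⟩, hs0⟩
    unfold betaFn
    rw [← hcdef, heq]
  have hphi0 : (fun s : ℝ => s + (Real.log (1 - s) - Real.log (1 + s)) / 2) 0 = 0 := by
    simp
  constructor
  · -- positivity
    intro L hL
    obtain ⟨heq, hmem, hs0⟩ := hbeta L hL
    rw [heq]
    have := aux_phi_anti (Set.mem_Ico.mpr ⟨le_refl 0, one_pos⟩) hmem hs0
    rw [hphi0] at this
    linarith
  constructor
  · -- monotone
    intro L₁ L₂ hL₁ hL₂
    have hL₂' : ⌈c⌉₊ ≤ L₂ := le_trans hL₁ hL₂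
    obtain ⟨heq₁, hmem₁, _⟩ := hbeta L₁ hL₁
    obtain ⟨heq₂, hmem₂, _⟩ := hbeta L₂ hL₂'
    rw [heq₁, heq₂]
    have hxle : c / ((L₂ : ℝ) + 1 / 2) ≤ c / ((L₁ : ℝ) + 1 / 2) := by
      apply div_le_div_of_nonneg_left (le_of_lt hc0) (by positivity)
      have : (L₁ : ℝ) ≤ (L₂ : ℝ) := by exact_mod_cast hL₂
      linarith
    have hx₂0 := (hxfacts L₂ hL₂').1
    have hsle : Real.sqrt (1 - (c / ((L₁ : ℝ) + 1 / 2)) ^ 2) ≤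
        Real.sqrt (1 - (c / ((L₂ : ℝ) + 1 / 2)) ^ 2) := by
      apply Real.sqrt_le_sqrt
      nlinarith
    have := aux_phi_anti.antitoneOn hmem₁ hmem₂ hsle
    linarith
  · -- tendsto
    have hlow : ∀ L : ℕ, ⌈c⌉₊ ≤ L →
        Real.log (((L : ℝ) + 1 / 2) / c) - 1 ≤ betaFn a k L := by
      intro L hL
      obtain ⟨hx0, hx1⟩ := hxfacts L hL
      obtain ⟨heq, hs0, hs1⟩ := siegelF_log_eq _ hx0 hx1
      have h1ms : (0 : ℝ) < 1 - Real.sqrt (1 - (c / ((L : ℝ) + 1 / 2)) ^ 2) := by linarith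
      have hlog1 : Real.log (1 - Real.sqrt (1 - (c / ((L : ℝ) + 1 / 2)) ^ 2)) ≤ 0 :=
        Real.log_nonpos (le_of_lt h1ms) (by linarith)
      have hlog2 : 0 ≤ Real.log (1 + Real.sqrt (1 - (c / ((L : ℝ) + 1 / 2)) ^ 2)) :=
        Real.log_nonneg (by linarith)
      have hlogx : Real.log (c / ((L : ℝ) + 1 / 2)) =
          (Real.log (1 - Real.sqrt (1 - (c / ((L : ℝ) + 1 / 2)) ^ 2)) +
            Real.log (1 + Real.sqrt (1 - (c / ((L : ℝ) + 1 / 2)) ^ 2))) / 2 := by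
        -- re-derive as in siegelF_log_eq
        set x := c / ((L : ℝ) + 1 / 2)
        set s := Real.sqrt (1 - x ^ 2)
        have h1x : (0 : ℝ) < 1 - x ^ 2 := by nlinarith
        have hs2 : s ^ 2 = 1 - x ^ 2 := Real.sq_sqrt (le_of_lt h1x)
        have hx2 : x ^ 2 = (1 - s) * (1 + s) := by nlinarith
        have h := Real.log_pow x 2
        rw [hx2, Real.log_mul (ne_of_gt h1ms) (ne_of_gt (by linarith : (0:ℝ) < 1 + s))] at h
        push_cast at h
        linarith
      have hinv : Real.log (((L : ℝ) + 1 / 2) / c) = -Real.log (c / ((L : ℝ) + 1 / 2)) := by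
        rw [← Real.log_inv, inv_div]
      unfold betaFn
      rw [← hcdef, heq, hinv, hlogx]
      set s := Real.sqrt (1 - (c / ((L : ℝ) + 1 / 2)) ^ 2)
      have hsle1 : s ≤ 1 := le_of_lt hs1
      linarith
    have h1 : Tendsto (fun L : ℕ => ((L : ℝ) + 1 / 2) / c) atTop atTop := by
      apply Tendsto.atTop_div_const hc0
      exact tendsto_atTop_add_const_right _ _ tendsto_natCast_atTop_atTop
    have h2 : Tendsto (fun L : ℕ => Real.log (((L : ℝ) + 1 / 2) / c) - 1) atTop atTop := by
      apply tendsto_atTop_add_const_right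
      exact Real.tendsto_log_atTop.comp h1
    apply tendsto_atTop_mono' atTop _ h2
    filter_upwards [eventually_ge_atTop ⌈c⌉₊] with L hL
    exact hlow L hL
end
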